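/- For s ∈ (0, π̂/2), the function G_1(s) = s(1+|tan_p s|^p)(p·s + (1-p)·tan_p s) - |tan_p s|^2 is strictly negative. -/

import Mathlib

open Real

noncomputable def plPow (p u : ℝ) : ℝ := |u| ^ (p - 2) * u

noncomputable def pihat (p : ℝ) : ℝ := 2 * ∫ t in (0:ℝ)..1, (1 - t ^ p) ^ (-(1 / p))

open Real Set Filter Topology intervalIntegral MeasureTheory


lemma plPow_zero (p : ℝ) : plPow p 0 = 0 := by simp [plPow]

lemma plPow_one (p : ℝ) : plPow p 1 = 1 := by simp [plPow]

lemma abs_plPow (p u : ℝ) (hu : u ≠ 0) : |plPow p u| = |u| ^ (p - 1) := by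
  have h : (0:ℝ) < |u| := abs_pos.2 hu
  rw [plPow, abs_mul, abs_of_nonneg (rpow_nonneg (abs_nonneg u) _),
    ← Real.rpow_add_one h.ne']
  ring_nf

lemma plPow_of_nonneg {p u : ℝ} (hp : 1 < p) (hu : 0 ≤ u) : plPow p u = u ^ (p - 1) := by
  rcases eq_or_lt_of_le hu with h | h
  · simp [plPow, ← h, Real.zero_rpow (by linarith : p - 1 ≠ 0)]
  · rw [plPow, abs_of_pos h, ← Real.rpow_add_one h.ne']; ring_nf

lemma plPow_pos_iff {p u : ℝ} : 0 < plPow p u ↔ 0 < u := by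
  rcases lt_trichotomy u 0 with h | h | h
  · simp only [plPow]
    constructor
    · intro hc
      nlinarith [rpow_nonneg (abs_nonneg u) (p - 2), mul_nonneg (rpow_nonneg (abs_nonneg u) (p-2)) (neg_nonneg.2 h.le)]
    · intro hc; linarith
  · subst h; simp [plPow]
  · constructor
    · intro; exact h
    · intro
      exact mul_pos (rpow_pos_of_pos (abs_pos.2 h.ne') _) h

lemma plPow_eq_zero_iff {p u : ℝ} : plPow p u = 0 ↔ u = 0 := by
  constructor
  · intro h
    by_contra hu
    have := abs_plPow p u hu
    rw [h, abs_zero] at this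
    exact (rpow_pos_of_pos (abs_pos.2 hu) (p-1)).ne' this.symm
  · intro h; simp [h, plPow_zero]

lemma tendsto_abs_rpow_zero {r : ℝ} (hr : 0 < r) :
    Tendsto (fun u : ℝ => |u| ^ r) (𝓝 0) (𝓝 0) := by
  have : ContinuousAt (fun u : ℝ => |u| ^ r) 0 :=
    (Real.continuousAt_rpow_const _ r (Or.inr hr.le)).comp continuous_abs.continuousAt
  simpa [Real.zero_rpow hr.ne'] using this.tendsto

lemma hasDerivAt_absRpow {r : ℝ} (hr : 1 < r) (u : ℝ) :
    HasDerivAt (fun v : ℝ => |v| ^ r) (r * plPow r u) u := by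
  have := hasDerivAt_abs_rpow u hr
  rwa [plPow, ← mul_assoc]

lemma continuous_plPow {r : ℝ} (hr : 1 < r) : Continuous (plPow r) := by
  rw [continuous_iff_continuousAt]
  intro u
  rcases eq_or_ne u 0 with h | h
  · subst h
    rw [ContinuousAt, plPow_zero]
    refine squeeze_zero_norm' ?_ (tendsto_abs_rpow_zero (r := r - 1) (by linarith))
    filter_upwards with v
    rcases eq_or_ne v 0 with hv | hv
    · simp [hv, plPow_zero, rpow_nonneg]
    · rw [Real.norm_eq_abs, abs_plPow r v hv]
  · exact (((Real.continuousAt_rpow_const _ _ (Or.inl (abs_ne_zero.2 h))).comp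
      continuous_abs.continuousAt).mul continuousAt_id)

lemma plPow_plPow {p : ℝ} (hp : 1 < p) (u : ℝ) : plPow (p / (p-1)) (plPow p u) = u := by
  have hp1 : p - 1 ≠ 0 := by linarith
  rcases eq_or_ne u 0 with h | h
  · simp [h, plPow_zero]
  · have hu : (0:ℝ) < |u| := abs_pos.2 h
    rw [plPow, abs_plPow p u h, plPow, ← Real.rpow_mul (abs_nonneg u), ← mul_assoc,
      ← Real.rpow_add hu, show (p - 1) * (p / (p - 1) - 2) + (p - 2) = 0 by field_simp; ring,
      Real.rpow_zero, one_mul]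

lemma hasDerivAt_plPow {r : ℝ} (hr : 1 < r) {v : ℝ} (hv : v ≠ 0) :
    HasDerivAt (plPow r) ((r-1) * |v| ^ (r-2)) v := by
  rcases lt_or_gt_of_ne hv with h | h
  · have k1 := (Real.hasDerivAt_rpow_const (x := -v) (p := r-1)
      (Or.inl (neg_ne_zero.2 h.ne))).comp v (hasDerivAt_neg v)
    have k2 : HasDerivAt (fun w : ℝ => -((-w) ^ (r-1))) ((r-1) * |v| ^ (r-2)) v := by
      refine k1.neg.congr_deriv ?_
      symm
      rw [abs_of_neg h]; ring
    refine k2.congr_of_eventuallyEq ?_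
    filter_upwards [Iio_mem_nhds h] with w hw
    have hw' : (0:ℝ) < -w := by simpa using hw
    rw [plPow, abs_of_neg (Set.mem_Iio.1 hw), show r - 1 = (r-2) + 1 by ring,
      Real.rpow_add_one hw'.ne']
    ring
  · have k1 : HasDerivAt (fun w : ℝ => w ^ (r-1)) ((r-1) * |v| ^ (r - 2)) v := by
      have := Real.hasDerivAt_rpow_const (x := v) (p := r-1) (Or.inl h.ne')
      convert this using 1
      rw [abs_of_pos h]; ring_nf
    refine k1.congr_of_eventuallyEq ?_
    filter_upwards [Ioi_mem_nhds h] with w hw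
    rw [plPow, abs_of_pos (Set.mem_Ioi.1 hw), show r - 1 = (r-2) + 1 by ring,
      Real.rpow_add_one (ne_of_gt hw)]

noncomputable def Aa (p T : ℝ) : ℝ := ∫ u in (0:ℝ)..T, (1 + |u| ^ p)⁻¹

section Aphi
variable {p : ℝ} (hp : 1 < p)

lemma cont_intg (hp : 1 < p) : Continuous (fun u : ℝ => (1 + |u| ^ p)⁻¹) := by
  have h1 : Continuous (fun u : ℝ => 1 + |u| ^ p) := by
    apply continuous_const.add
    rw [continuous_iff_continuousAt]
    exact fun u => (Real.continuousAt_rpow_const _ _ (Or.inr (by linarith))).comp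
      continuous_abs.continuousAt
  exact h1.inv₀ (fun u => by positivity)

lemma hAa (hp : 1 < p) (T : ℝ) : HasDerivAt (Aa p) ((1 + |T| ^ p)⁻¹) T :=
  intervalIntegral.integral_hasDerivAt_right ((cont_intg hp).intervalIntegrable (μ := volume) _ _)
    ((cont_intg hp).stronglyMeasurableAtFilter _ _) (cont_intg hp).continuousAt

lemma Aa_zero : Aa p 0 = 0 := intervalIntegral.integral_same

lemma Aa_pos (hp : 1 < p) {T : ℝ} (hT : 0 < T) : 0 < Aa p T :=
  intervalIntegral.intervalIntegral_pos_of_pos_on ((cont_intg hp).intervalIntegrable (μ := volume) _ _)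
    (fun u _ => by positivity) hT

lemma Aa_le (hp : 1 < p) {T : ℝ} (hT : 0 < T) : Aa p T ≤ T := by
  have := intervalIntegral.integral_mono_on (a := 0) (b := T) (f := fun u : ℝ => (1 + |u| ^ p)⁻¹)
    (g := fun _ => (1:ℝ)) hT.le ((cont_intg hp).intervalIntegrable (μ := volume) _ _)
    (continuous_const.intervalIntegrable (μ := volume) _ _)
    (fun u _ => by
      rw [inv_le_one_iff₀]
      right
      nlinarith [Real.rpow_nonneg (abs_nonneg u) p])
  simpa [Aa] using this

noncomputable def phiF (p T : ℝ) : ℝ :=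
  T ^ 2 - Aa p T * (1 + T ^ p) * (p * Aa p T - (p - 1) * T)

noncomputable def psiF (p T : ℝ) : ℝ :=
  (p + 1) * (T - Aa p T) + (p ^ 2 - 1) * Aa p T * T ^ p - p ^ 2 * (Aa p T) ^ 2 * T ^ (p - 1)

lemma cont_rpowc {q : ℝ} (hq : 0 ≤ q) : Continuous (fun T : ℝ => T ^ q) := by
  rw [continuous_iff_continuousAt]
  exact fun T => Real.continuousAt_rpow_const _ _ (Or.inr hq)

lemma cont_Aa (hp : 1 < p) : Continuous (Aa p) :=
  continuous_iff_continuousAt.2 fun T => (hAa hp T).continuousAt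

lemma cont_psiF (hp : 1 < p) : Continuous (psiF p) := by
  unfold psiF
  have h1 := cont_rpowc (q := p) (by linarith)
  have h2 := cont_rpowc (q := p - 1) (by linarith)
  have hA := cont_Aa hp
  continuity

lemma cont_phiF (hp : 1 < p) : Continuous (phiF p) := by
  unfold phiF
  have h1 := cont_rpowc (q := p) (by linarith)
  have hA := cont_Aa hp
  continuity

lemma psiF_zero (hp : 1 < p) : psiF p 0 = 0 := by
  simp [psiF, Aa_zero, Real.zero_rpow (by linarith : p ≠ 0),
    Real.zero_rpow (by linarith : p - 1 ≠ 0)]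

lemma phiF_zero (hp : 1 < p) : phiF p 0 = 0 := by
  simp [phiF, Aa_zero]

lemma psiF_hasDeriv (hp : 1 < p) {T : ℝ} (hT : 0 < T) :
    ∃ d, HasDerivAt (psiF p) d T ∧ 0 < d := by
  have hB : (0:ℝ) < 1 + T ^ p := by positivity
  have hA' : HasDerivAt (Aa p) ((1 + T ^ p)⁻¹) T := by
    have := hAa hp T
    rwa [abs_of_pos hT] at this
  have hTp : HasDerivAt (fun T : ℝ => T ^ p) (p * T ^ (p - 1)) T :=
    Real.hasDerivAt_rpow_const (Or.inl hT.ne')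
  have hTp1 : HasDerivAt (fun T : ℝ => T ^ (p - 1)) ((p - 1) * T ^ (p - 2)) T := by
    have := Real.hasDerivAt_rpow_const (x := T) (p := p - 1) (Or.inl hT.ne')
    rwa [show p - 1 - 1 = p - 2 by ring] at this
  have h1 : HasDerivAt (fun T : ℝ => (p + 1) * (T - Aa p T))
      ((p + 1) * (1 - (1 + T ^ p)⁻¹)) T := ((hasDerivAt_id T).sub hA').const_mul _
  have h2 : HasDerivAt (fun T : ℝ => (p ^ 2 - 1) * Aa p T * T ^ p)
      ((p ^ 2 - 1) * (1 + T ^ p)⁻¹ * T ^ p + (p ^ 2 - 1) * Aa p T * (p * T ^ (p - 1))) T :=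
    (hA'.const_mul _).mul hTp
  have h3 : HasDerivAt (fun T : ℝ => p ^ 2 * (Aa p T) ^ 2 * T ^ (p - 1))
      ((p ^ 2 * (2 * Aa p T * (1 + T ^ p)⁻¹)) * T ^ (p - 1)
        + p ^ 2 * (Aa p T) ^ 2 * ((p - 1) * T ^ (p - 2))) T := by
    have := ((hA'.pow 2).const_mul (p ^ 2)).mul hTp1
    refine this.congr_deriv ?_
    simp only [Pi.pow_apply]
    ring
  refine ⟨_, (h1.add h2).sub h3, ?_⟩
  set a := Aa p T with ha_def
  have ha : 0 < a := Aa_pos hp hT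
  have haT : a ≤ T := Aa_le hp hT
  set z := T ^ (p - 2) with hz_def
  have hz : 0 < z := Real.rpow_pos_of_pos hT _
  have hy : T ^ (p - 1) = z * T := by
    rw [hz_def, ← Real.rpow_add_one hT.ne']; ring_nf
  have hx : T ^ p = z * T * T := by
    rw [← hy, ← Real.rpow_add_one hT.ne']; ring_nf
  set x := T ^ p with hx_def
  have hxpos : 0 < x := Real.rpow_pos_of_pos hT _
  have hR : 0 < (p + 1) * T ^ 2 + a * T * ((p ^ 2 - 1) * (1 + x) - 2 * p)
      - p * (p - 1) * a ^ 2 * (1 + x) := by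
    have key : T * ((p + 1) * T ^ 2 + a * T * ((p ^ 2 - 1) * (1 + x) - 2 * p)
        - p * (p - 1) * a ^ 2 * (1 + x))
        = (T - a) * ((p + 1) * T ^ 2) + a * ((p - 1) * T ^ 2 * x)
          + (p * (p - 1) * (1 + x) * T) * (a * (T - a)) := by ring
    have t1 : 0 ≤ (T - a) * ((p + 1) * T ^ 2) := by
      apply mul_nonneg (by linarith) (by positivity)
    have t2 : 0 < a * ((p - 1) * T ^ 2 * x) := by
      apply mul_pos ha
      apply mul_pos (by nlinarith) hxpos
    have t3 : 0 ≤ (p * (p - 1) * (1 + x) * T) * (a * (T - a)) := by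
      exact mul_nonneg (mul_pos (mul_pos (mul_pos (by linarith : (0:ℝ) < p)
        (by linarith : (0:ℝ) < p - 1)) hB) hT).le (mul_nonneg ha.le (by linarith))
    nlinarith [key]
  -- now show the derivative is positive
  have hgoal : (1 + x) * ((p + 1) * (1 - (1 + x)⁻¹)
      + ((p ^ 2 - 1) * (1 + x)⁻¹ * x + (p ^ 2 - 1) * a * (p * (z * T)))
      - ((p ^ 2 * (2 * a * (1 + x)⁻¹)) * (z * T) + p ^ 2 * a ^ 2 * ((p - 1) * z)))
      = p * z * ((p + 1) * T ^ 2 + a * T * ((p ^ 2 - 1) * (1 + x) - 2 * p)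
      - p * (p - 1) * a ^ 2 * (1 + x)) := by
    have hBx : (1 + x) ≠ 0 := by positivity
    field_simp
    rw [hx]; ring
  rw [hy]
  have hpos2 : 0 < p * z * ((p + 1) * T ^ 2 + a * T * ((p ^ 2 - 1) * (1 + x) - 2 * p)
      - p * (p - 1) * a ^ 2 * (1 + x)) := by
    apply mul_pos (mul_pos (by linarith) hz) hR
  nlinarith [hgoal, hpos2, hB]

lemma psiF_pos (hp : 1 < p) {T : ℝ} (hT : 0 < T) : 0 < psiF p T := by
  have hmono : StrictMonoOn (psiF p) (Set.Ici 0) := by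
    apply strictMonoOn_of_deriv_pos (convex_Ici 0) (cont_psiF hp).continuousOn
    intro x hx
    rw [interior_Ici] at hx
    obtain ⟨d, hd, hdpos⟩ := psiF_hasDeriv hp hx
    rwa [hd.deriv]
  have := hmono (Set.self_mem_Ici) (Set.mem_Ici.2 hT.le) hT
  rwa [psiF_zero hp] at this

lemma phiF_hasDeriv (hp : 1 < p) {T : ℝ} (hT : 0 < T) :
    HasDerivAt (phiF p) (psiF p T) T := by
  have hB : (0:ℝ) < 1 + T ^ p := by positivity
  have hA' : HasDerivAt (Aa p) ((1 + T ^ p)⁻¹) T := by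
    have := hAa hp T
    rwa [abs_of_pos hT] at this
  have hTp : HasDerivAt (fun T : ℝ => T ^ p) (p * T ^ (p - 1)) T :=
    Real.hasDerivAt_rpow_const (Or.inl hT.ne')
  have hB' : HasDerivAt (fun T : ℝ => 1 + T ^ p) (p * T ^ (p - 1)) T := hTp.const_add 1
  have hinner : HasDerivAt (fun T : ℝ => p * Aa p T - (p - 1) * T)
      (p * (1 + T ^ p)⁻¹ - (p - 1)) T := by
    have := (hA'.const_mul p).sub ((hasDerivAt_id T).const_mul (p - 1))
    exact this.congr_deriv (by ring)
  have hmain := (hasDerivAt_pow 2 T).sub ((hA'.mul hB').mul hinner)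
  refine hmain.congr_deriv ?_
  symm
  have hy : T ^ (p - 1) = T ^ (p - 2) * T := by
    rw [← Real.rpow_add_one hT.ne']; ring_nf
  have hx : T ^ p = T ^ (p - 2) * T * T := by
    rw [← hy, ← Real.rpow_add_one hT.ne']; ring_nf
  have hBx : (1 + T ^ p) ≠ 0 := hB.ne'
  simp only [Pi.mul_apply]
  rw [psiF]
  field_simp
  rw [hy, hx]
  ring

lemma phiF_pos (hp : 1 < p) {T : ℝ} (hT : 0 < T) : 0 < phiF p T := by
  have hmono : StrictMonoOn (phiF p) (Set.Ici 0) := by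
    apply strictMonoOn_of_deriv_pos (convex_Ici 0) (cont_phiF hp).continuousOn
    intro x hx
    rw [interior_Ici] at hx
    rw [(phiF_hasDeriv hp hx).deriv]
    exact psiF_pos hp hx
  have := hmono (Set.self_mem_Ici) (Set.mem_Ici.2 hT.le) hT
  rwa [phiF_zero hp] at this

lemma key_ineq (hp : 1 < p) {T : ℝ} (hT : 0 < T) :
    Aa p T * (1 + T ^ p) * (p * Aa p T - (p - 1) * T) - T ^ 2 < 0 := by
  have := phiF_pos hp hT
  rw [phiF] at this
  linarith

end Aphi

/-- for `s ∈ (0, π̂/2)`, with `tan_p = S_p/S_p'`,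
`G₁(s) = s(1+|tan_p s|^p)(p s + (1-p) tan_p s) - |tan_p s|^2 < 0`. -/
theorem G1_neg (p : ℝ) (hp : 1 < p) (S S' : ℝ → ℝ)
    (hd : ∀ x, HasDerivAt S (S' x) x)
    (hode : ∀ x, HasDerivAt (fun s => plPow p (S' s)) (-(p - 1) * plPow p (S x)) x)
    (h0 : S 0 = 0) (h0' : S' 0 = 1)
    (hpos : ∀ x ∈ Set.Ioo 0 (pihat p), 0 < S x) (hz : S (pihat p) = 0) :
    ∀ s ∈ Set.Ioo 0 (pihat p / 2),
      s * (1 + |S s / S' s| ^ p) * (p * s + (1 - p) * (S s / S' s)) -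
        |S s / S' s| ^ 2 < 0 := by
  intro s hs
  obtain ⟨hs0, hs2⟩ := hs
  have hpi : 0 < pihat p := by linarith
  have hpi2 : pihat p / 2 < pihat p := by linarith
  have hp0 : (0 : ℝ) < p - 1 := by linarith
  have hppos : (0 : ℝ) < p := by linarith
  have hq : 1 < p / (p - 1) := (one_lt_div hp0).2 (by linarith)
  -- energy identity
  have hDabs : ∀ x, HasDerivAt (fun y => |S y| ^ p) (p * plPow p (S x) * S' x) x := by
    intro x
    exact (hasDerivAt_absRpow hp (S x)).comp x (hd x)
  have habsq : ∀ w : ℝ, |plPow p w| ^ (p / (p - 1)) = |w| ^ p := by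
    intro w
    rcases eq_or_ne w 0 with h | h
    · rw [h, plPow_zero, abs_zero, Real.zero_rpow (by positivity : p / (p-1) ≠ 0),
        Real.zero_rpow (by positivity : p ≠ 0)]
    · rw [abs_plPow p w h, ← Real.rpow_mul (abs_nonneg w)]
      congr 1
      field_simp
  have hD2 : ∀ x, HasDerivAt (fun y => |S' y| ^ p) (-(p * plPow p (S x) * S' x)) x := by
    intro x
    have h1 := (hasDerivAt_absRpow hq (plPow p (S' x))).comp x (hode x)
    have hfeq : (fun y => |S' y| ^ p) = (fun y => |plPow p (S' y)| ^ (p / (p - 1))) := by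
      funext y; rw [habsq]
    rw [hfeq]
    refine h1.congr_deriv ?_
    symm
    rw [plPow_plPow hp]
    have h1 : p - 1 ≠ 0 := by linarith
    field_simp
  have energy : ∀ x, |S x| ^ p + |S' x| ^ p = 1 := by
    have hdiff : Differentiable ℝ (fun x => |S x| ^ p + |S' x| ^ p) :=
      fun x => ((hDabs x).add (hD2 x)).differentiableAt
    have hconst := is_const_of_deriv_eq_zero hdiff
      (fun x => ((hDabs x).add (hD2 x)).deriv.trans (by ring))
    intro x
    rw [hconst x 0, h0, h0']
    simp [Real.zero_rpow (by positivity : p ≠ 0)]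
  -- continuity of S'
  have hS'eq : ∀ x, plPow (p / (p - 1)) (plPow p (S' x)) = S' x := fun x => plPow_plPow hp _
  have hcontV : Continuous (fun x => plPow p (S' x)) :=
    continuous_iff_continuousAt.2 fun x => (hode x).differentiableAt.continuousAt
  have hcontS' : Continuous S' := by
    have : Continuous (fun x => plPow (p / (p - 1)) (plPow p (S' x))) :=
      (continuous_plPow hq).comp hcontV
    simpa only [hS'eq] using this
  have hcontS : Continuous S :=
    continuous_iff_continuousAt.2 fun x => (hd x).differentiableAt.continuousAt
  -- integrability dichotomy
  by_cases hInt : IntervalIntegrable (fun t : ℝ => (1 - t ^ p) ^ (-(1 / p))) volume 0 1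
  swap
  · exfalso
    rw [pihat, intervalIntegral.integral_undef hInt] at hpi
    norm_num at hpi
  -- S' > 0 on [0, pihat/2)
  have hS'pos : ∀ y, 0 ≤ y → y < pihat p / 2 → 0 < S' y := by
    by_contra hcon
    push_neg at hcon
    obtain ⟨y0, hy00, hy02, hy0le⟩ := hcon
    have hVanti : StrictAntiOn (fun x => plPow p (S' x)) (Set.Icc 0 (pihat p)) := by
      apply strictAntiOn_of_deriv_neg (convex_Icc _ _) hcontV.continuousOn
      intro x hx
      rw [interior_Icc] at hx
      rw [(hode x).deriv]
      have := plPow_pos_iff (p := p).2 (hpos x hx)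
      nlinarith
    have hV0 : plPow p (S' 0) = 1 := by rw [h0', plPow_one]
    have hVy0 : plPow p (S' y0) ≤ 0 := by
      by_contra hc
      push_neg at hc
      exact absurd (plPow_pos_iff.1 hc) (not_lt.2 hy0le)
    -- IVT to find zero x0 of S'
    obtain ⟨x0, hx0mem, hVx0⟩ : ∃ x0 ∈ Set.Icc 0 y0, plPow p (S' x0) = 0 := by
      have := intermediate_value_Icc' hy00 (hcontV.continuousOn (s := Set.Icc 0 y0))
      have h0mem : (0:ℝ) ∈ Set.Icc (plPow p (S' y0)) (plPow p (S' 0)) := by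
        rw [hV0]; exact ⟨hVy0, by norm_num⟩
      obtain ⟨x0, hx0, hVx0⟩ := this h0mem
      exact ⟨x0, hx0, hVx0⟩
    have hx0pos : 0 < x0 := by
      rcases eq_or_lt_of_le hx0mem.1 with h | h
      · exfalso; rw [← h] at hVx0; rw [hVx0] at hV0; norm_num at hV0
      · exact h
    have hx0lt : x0 < pihat p / 2 := lt_of_le_of_lt hx0mem.2 hy02
    have hS'x0 : S' x0 = 0 := plPow_eq_zero_iff.1 hVx0
    have hSx0 : S x0 = 1 := by
      have he := energy x0
      rw [hS'x0, abs_zero, Real.zero_rpow (by positivity : p ≠ 0), add_zero] at he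
      have hSpos : 0 < S x0 := hpos x0 ⟨hx0pos, by linarith⟩
      rw [abs_of_pos hSpos] at he
      rcases lt_trichotomy (S x0) 1 with h | h | h
      · exact absurd he (ne_of_lt (Real.rpow_lt_one hSpos.le h hppos))
      · exact h
      · exact absurd he (ne_of_gt (Real.one_lt_rpow h hppos))
    have hS'posx0 : ∀ y, 0 ≤ y → y < x0 → 0 < S' y := by
      intro y hy0 hyx
      rcases eq_or_lt_of_le hy0 with h | h
      · rw [← h, h0']; norm_num
      · apply plPow_pos_iff (p := p).1
        have := hVanti (Set.mem_Icc.2 ⟨hy0, by linarith⟩)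
          (Set.mem_Icc.2 ⟨hx0pos.le, by linarith⟩) hyx
        simpa [hVx0] using this
    have hSmono : StrictMonoOn S (Set.Icc 0 x0) := by
      apply strictMonoOn_of_deriv_pos (convex_Icc _ _) hcontS.continuousOn
      intro y hy
      rw [interior_Icc] at hy
      rw [(hd y).deriv]
      exact hS'posx0 y hy.1.le hy.2
    have hSnonneg : ∀ y ∈ Set.Icc 0 x0, 0 ≤ S y := by
      intro y hy
      rcases eq_or_lt_of_le hy.1 with h | h
      · rw [← h, h0]
      · exact (hpos y ⟨h, by linarith [hy.2]⟩).le
    have hSle1 : ∀ y ∈ Set.Icc 0 x0, S y ≤ 1 := by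
      intro y hy
      rw [← hSx0]
      exact hSmono.monotoneOn hy (Set.mem_Icc.2 ⟨hx0pos.le, le_refl _⟩) hy.2
    -- substitution: for b in (0, x0), F (S b) = b
    set g : ℝ → ℝ := fun u => (1 - u ^ p) ^ (-(1 / p)) with hg_def
    have keysub : ∀ b, 0 < b → b < x0 → (∫ u in (0:ℝ)..(S b), g u) = b := by
      intro b hb0 hbx
      have hbmem : b ∈ Set.Icc (0:ℝ) x0 := ⟨hb0.le, hbx.le⟩
      have hSb1 : S b < 1 := by
        rw [← hSx0]
        exact hSmono hbmem (Set.mem_Icc.2 ⟨hx0pos.le, le_refl _⟩) hbx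
      have hSb0 : 0 ≤ S b := hSnonneg b hbmem
      have huIcc : Set.uIcc (0:ℝ) b = Set.Icc 0 b := Set.uIcc_of_le hb0.le
      have hgcont : ContinuousOn g (Set.Icc 0 (S b)) := by
        apply ContinuousOn.rpow_const
        · exact (continuous_const.sub (cont_rpowc hppos.le)).continuousOn
        · intro u hu
          left
          have h1 : u ^ p ≤ (S b) ^ p := Real.rpow_le_rpow hu.1 hu.2 hppos.le
          have h2 : (S b) ^ p < 1 := Real.rpow_lt_one hSb0 hSb1 hppos
          nlinarith
      have himg : S '' Set.uIcc 0 b ⊆ Set.Icc 0 (S b) := by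
        rw [huIcc]
        rintro _ ⟨y, hy, rfl⟩
        have hyIcc : y ∈ Set.Icc (0:ℝ) x0 := ⟨hy.1, le_trans hy.2 hbx.le⟩
        refine ⟨hSnonneg y hyIcc, ?_⟩
        exact hSmono.monotoneOn hyIcc hbmem hy.2
      have hsub := intervalIntegral.integral_comp_smul_deriv' (f := S) (f' := S') (g := g)
        (fun y _ => hd y) hcontS'.continuousOn (hgcont.mono himg)
      simp only [Function.comp] at hsub
      rw [h0] at hsub
      rw [← hsub]
      have heq : Set.EqOn (fun x => S' x • g (S x)) (fun _ => (1:ℝ)) (Set.uIcc 0 b) := by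
        intro t ht
        rw [huIcc] at ht
        have htx : t ∈ Set.Icc (0:ℝ) x0 := ⟨ht.1, le_trans ht.2 hbx.le⟩
        have hSt0 : 0 ≤ S t := hSnonneg t htx
        have hStb : S t ≤ S b := hSmono.monotoneOn htx hbmem ht.2
        have hbase : 0 < 1 - (S t) ^ p := by
          have h1 : (S t) ^ p ≤ (S b) ^ p := Real.rpow_le_rpow hSt0 hStb hppos.le
          have h2 : (S b) ^ p < 1 := Real.rpow_lt_one hSb0 hSb1 hppos
          linarith
        have hS't : 0 < S' t := hS'posx0 t ht.1 (lt_of_le_of_lt ht.2 hbx)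
        have hS'tp : (S' t) ^ p = 1 - (S t) ^ p := by
          have := energy t
          rw [abs_of_pos hS't, abs_of_nonneg hSt0] at this
          linarith
        have hS'val : S' t = (1 - (S t) ^ p) ^ (p⁻¹) := by
          rw [← hS'tp, Real.rpow_rpow_inv hS't.le (by positivity)]
        simp only [smul_eq_mul]
        rw [hS'val, hg_def]
        rw [← Real.rpow_add hbase]
        rw [show p⁻¹ + -(1/p) = 0 by field_simp; ring]
        exact Real.rpow_zero _
      rw [intervalIntegral.integral_congr heq]
      simp
    -- limit argument: F (S b) = b, let b → x0
    set F : ℝ → ℝ := fun c => ∫ u in (0:ℝ)..c, g u with hF_def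
    have hFcont : ContinuousOn F (Set.Icc 0 1) := by
      have := intervalIntegral.continuousOn_primitive_interval'
        (μ := volume) (f := g) (b₁ := 0) (b₂ := 1) hInt Set.left_mem_uIcc
      rwa [Set.uIcc_of_le (by norm_num : (0:ℝ) ≤ 1)] at this
    haveI hNB : (𝓝[Set.Ioo 0 x0] x0).NeBot := by
      apply mem_closure_iff_nhdsWithin_neBot.1
      rw [closure_Ioo hx0pos.ne]
      exact ⟨hx0pos.le, le_refl _⟩
    have ht1 : Tendsto S (𝓝[Set.Ioo 0 x0] x0) (𝓝[Set.Icc 0 1] 1) := by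
      rw [tendsto_nhdsWithin_iff]
      constructor
      · have := (hd x0).continuousAt.continuousWithinAt (s := Set.Ioo 0 x0)
        rwa [ContinuousWithinAt, hSx0] at this
      · filter_upwards [self_mem_nhdsWithin] with y hy
        have hyIcc : y ∈ Set.Icc (0:ℝ) x0 := ⟨hy.1.le, hy.2.le⟩
        exact ⟨hSnonneg y hyIcc, hSle1 y hyIcc⟩
    have ht2 : Tendsto (F ∘ S) (𝓝[Set.Ioo 0 x0] x0) (𝓝 (F 1)) :=
      Filter.Tendsto.comp (hFcont 1 ⟨zero_le_one, le_refl _⟩) ht1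
    have ht3 : Tendsto (F ∘ S) (𝓝[Set.Ioo 0 x0] x0) (𝓝 x0) := by
      apply Tendsto.congr' _ (tendsto_id.mono_left nhdsWithin_le_nhds)
      filter_upwards [self_mem_nhdsWithin] with b hb
      exact (keysub b hb.1 hb.2).symm
    have hF1 : F 1 = x0 := tendsto_nhds_unique ht2 ht3
    have : pihat p = 2 * x0 := by rw [pihat, ← hF1]
    linarith
  -- now the tangent function analysis
  have hS'posI : ∀ y, 0 ≤ y → y ≤ s → 0 < S' y := fun y hy0 hys =>
    hS'pos y hy0 (lt_of_le_of_lt hys hs2)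
  have hSnonnegI : ∀ y, 0 ≤ y → y ≤ s → 0 ≤ S y := by
    intro y hy0 hys
    rcases eq_or_lt_of_le hy0 with h | h
    · rw [← h, h0]
    · exact (hpos y ⟨h, by linarith⟩).le
  -- derivative of T = S/S'
  have hTderiv : ∀ y, 0 ≤ y → y ≤ s →
      HasDerivAt (fun z => S z / S' z) (1 + |S y / S' y| ^ p) y := by
    intro y hy0 hys
    have hS'y : 0 < S' y := hS'posI y hy0 hys
    have hSy : 0 ≤ S y := hSnonnegI y hy0 hys
    have hVy : plPow p (S' y) ≠ 0 := fun h => hS'y.ne' (plPow_eq_zero_iff.1 h)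
    have hS'd : HasDerivAt S'
        ((p / (p-1) - 1) * |plPow p (S' y)| ^ (p / (p-1) - 2) * (-(p - 1) * plPow p (S y))) y := by
      have k := (hasDerivAt_plPow hq hVy).comp y (hode y)
      rw [show (plPow (p / (p-1)) ∘ fun z => plPow p (S' z)) = S' from funext hS'eq] at k
      exact k
    have hdiv := (hd y).div hS'd hS'y.ne'
    refine hdiv.congr_deriv ?_
    symm
    -- simplify the derivative value
    have habsV : |plPow p (S' y)| = (S' y) ^ (p - 1) := by
      rw [abs_plPow p _ hS'y.ne', abs_of_pos hS'y]
    have hVexp : |plPow p (S' y)| ^ (p / (p-1) - 2) = (S' y) ^ (2 - p) := by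
      rw [habsV, ← Real.rpow_mul hS'y.le]
      congr 1
      field_simp
      ring
    have hq1 : p / (p - 1) - 1 = 1 / (p - 1) := by field_simp; ring
    have hplS : plPow p (S y) = (S y) ^ (p - 1) := plPow_of_nonneg hp hSy
    rw [hVexp, hq1, hplS]
    have hSS : S y * (S y) ^ (p - 1) = (S y) ^ p := by
      rcases eq_or_lt_of_le hSy with h | h
      · rw [← h, Real.zero_rpow (by positivity : p ≠ 0),
          Real.zero_rpow (show p - 1 ≠ 0 from hp0.ne')]
        ring
      · rw [mul_comm, ← Real.rpow_add_one h.ne', show p - 1 + 1 = p by ring]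
    have habsT : |S y / S' y| ^ p = (S y) ^ p / (S' y) ^ p := by
      rw [abs_of_nonneg (div_nonneg hSy hS'y.le), Real.div_rpow hSy hS'y.le]
    have hS'2p : (S' y) ^ (2 - p) = (S' y) ^ (2:ℕ) / (S' y) ^ p := by
      rw [Real.rpow_sub hS'y, Real.rpow_two]
    rw [habsT, hS'2p]
    have hb : S' y ≠ 0 := hS'y.ne'
    have hP : (S' y) ^ p ≠ 0 := (Real.rpow_pos_of_pos hS'y p).ne'
    field_simp
    linear_combination (-1 : ℝ) * hSS
  -- A (T s) = s via zero-derivative function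
  have hG : ∀ y ∈ Set.Icc 0 s, HasDerivAt (fun z => Aa p (S z / S' z) - z) 0 y := by
    intro y hy
    have hT := hTderiv y hy.1 hy.2
    have hA := (hAa hp (S y / S' y)).comp y hT
    have hfull := hA.sub (hasDerivAt_id y)
    refine hfull.congr_deriv ?_
    symm
    have hpos' : (0:ℝ) < 1 + |S y / S' y| ^ p := by positivity
    field_simp
    ring
  have hconst := constant_of_has_deriv_right_zero
    (f := fun z => Aa p (S z / S' z) - z) (a := 0) (b := s)
    (fun y hy => ((hG y hy).differentiableAt.continuousAt.continuousWithinAt))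
    (fun y hy => (hG y (Set.mem_Icc.2 ⟨hy.1, hy.2.le⟩)).hasDerivWithinAt)
  have hGs := hconst s (Set.mem_Icc.2 ⟨hs0.le, le_refl s⟩)
  simp only [h0, h0'] at hGs
  norm_num [Aa_zero] at hGs
  have hTpos : 0 < S s / S' s :=
    div_pos (hpos s ⟨hs0, by linarith⟩) (hS'posI s hs0.le (le_refl s))
  have hkey := key_ineq hp (T := S s / S' s) hTpos
  have heq : s * (1 + (S s / S' s) ^ p) * (p * s + (1 - p) * (S s / S' s)) - (S s / S' s) ^ 2
      = Aa p (S s / S' s) * (1 + (S s / S' s) ^ p) *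
          (p * Aa p (S s / S' s) - (p - 1) * (S s / S' s)) - (S s / S' s) ^ 2 := by
    have hGs' : Aa p (S s / S' s) = s := by linarith
    rw [hGs']; ring
  rw [abs_of_pos hTpos, heq]
  exact hkey
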